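/- A partial function f : ℕ →. ℕ satisfies f ≤subT g for all partial functions g if and only if f has a partial computable extension. Hence the least subTuring degree consists exactly of the partial functions extending to partial computable functions. -/

import Mathlib

open Classical

noncomputable section

/-- `as` is a valid answer history for the sequential oracle computation of `Φ`
with oracle `g` on input `n`: at each round `k`, the machine outputs a query
`(false, q)` with `q` in the domain of `g`, answered by `g q = as[k]`. -/
def ValidHist (Φ : List ℕ →. Bool × ℕ) (g : ℕ →. ℕ) (n : ℕ) (as : List ℕ) : Prop :=
  ∀ (k : ℕ) (hk : k < as.length), ∃ q : ℕ,
    (false, q) ∈ Φ (n :: as.take k) ∧ (as[k]'hk) ∈ g q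

/-- The sequential oracle computation `Φ[g](n)` halts with output `m`. -/
def HaltsTo (Φ : List ℕ →. Bool × ℕ) (g : ℕ →. ℕ) (n m : ℕ) : Prop :=
  ∃ as : List ℕ, ValidHist Φ g n as ∧ (true, m) ∈ Φ (n :: as)

/-- subTuring reducibility: `f ⊆ Φ[g]` for some partial computable `Φ`. -/
def SubTuringLE (f g : ℕ →. ℕ) : Prop :=
  ∃ Φ : List ℕ →. Bool × ℕ, Partrec Φ ∧ ∀ n m, m ∈ f n → HaltsTo Φ g n m

/-- subTuring equivalence. -/
def SubTuringEquiv (f g : ℕ →. ℕ) : Prop := SubTuringLE f g ∧ SubTuringLE g f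

theorem subTuring_least_degree (f : ℕ →. ℕ) :
    (∀ g : ℕ →. ℕ, SubTuringLE f g) ↔
      (∃ p : ℕ →. ℕ, Partrec p ∧ ∀ n m, m ∈ f n → m ∈ p n) := by

  constructor
  · intro H
    obtain ⟨Φ, hΦ, h⟩ := H (fun _ => Part.none)
    refine ⟨fun n => (Φ [n]).bind fun x => Part.ofOption (bif x.1 then some x.2 else none),
      ?_, ?_⟩
    · refine Partrec.bind (hΦ.comp (Primrec.to_comp (Primrec.list_cons.comp .id
        (Primrec.const [])))) ?_
      exact Computable.ofOption (Computable.cond (Computable.fst.comp .snd)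
        (Computable.option_some.comp (Computable.snd.comp .snd)) (Computable.const none))
    · intro n m hm
      obtain ⟨as, hv, hout⟩ := h n m hm
      have has : as = [] := by
        cases as with
        | nil => rfl
        | cons a t =>
          obtain ⟨q, _, hq⟩ := hv 0 (by simp)
          exact absurd hq (Part.notMem_none _)
      subst has
      exact Part.mem_bind_iff.mpr ⟨(true, m), hout, by simp⟩
  · rintro ⟨p, hp, hext⟩ g
    refine ⟨fun l => (p l.headI).map fun m => (true, m), ?_, ?_⟩
    · exact Partrec.map (hp.comp (Primrec.list_headI.to_comp))
        (Computable.pair (Computable.const true) Computable.snd).to₂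
    · intro n m hm
      refine ⟨[], fun k hk => absurd hk (by simp), ?_⟩
      exact (Part.mem_map_iff _).mpr ⟨m, by simpa using hext n m hm, rfl⟩
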